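/- Let K, K̃ be symmetric PSD n×n matrices and λ, ε > 0 with ε < 1 such that (1−ε)(K+λI) ⪯ K̃+λI ⪯ (1+ε)(K+λI). Then for any y ∈ ℝⁿ, the solutions α = (K+λI)⁻¹y and α̃ = (K̃+λI)⁻¹y satisfy ‖(K+λI)^{1/2}(α̃ − α)‖₂ ≤ (ε/(1−ε))·‖(K+λI)^{-1/2} y‖₂. -/

import Mathlib

open Matrix Real

open scoped ComplexOrder in
/-- The positive semidefinite square root of a positive semidefinite matrix
(as defined in Mathlib of December 2024, since removed). -/
noncomputable def Matrix.PosSemidef.sqrt {n 𝕜 : Type*} [Fintype n] [DecidableEq n] [RCLike 𝕜]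
    {A : Matrix n n 𝕜} (hA : A.PosSemidef) : Matrix n n 𝕜 :=
  (hA.1.eigenvectorUnitary : Matrix n n 𝕜) * diagonal ((↑) ∘ (√·) ∘ hA.1.eigenvalues) *
    (star hA.1.eigenvectorUnitary : Matrix n n 𝕜)

lemma Matrix.PosSemidef.sqrt_mul_self {n : Type*} [Fintype n] [DecidableEq n]
    {A : Matrix n n ℝ} (hA : A.PosSemidef) : hA.sqrt * hA.sqrt = A := by
  have hU : (star hA.1.eigenvectorUnitary : Matrix n n ℝ) *
      (hA.1.eigenvectorUnitary : Matrix n n ℝ) = 1 := Unitary.coe_star_mul_self _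
  have hD : diagonal ((RCLike.ofReal ∘ (√·) ∘ hA.1.eigenvalues) : n → ℝ) *
      diagonal ((RCLike.ofReal ∘ (√·) ∘ hA.1.eigenvalues) : n → ℝ) =
      diagonal (RCLike.ofReal ∘ hA.1.eigenvalues : n → ℝ) := by
    rw [diagonal_mul_diagonal]
    congr 1
    funext i
    simp only [Function.comp_apply]
    exact Real.mul_self_sqrt (hA.eigenvalues_nonneg i)
  conv_rhs => rw [hA.1.spectral_theorem, Unitary.conjStarAlgAut_apply]
  simp only [Matrix.PosSemidef.sqrt, Matrix.mul_assoc]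
  rw [← Matrix.mul_assoc (star (hA.1.eigenvectorUnitary : Matrix n n ℝ)), hU, Matrix.one_mul,
    ← Matrix.mul_assoc (diagonal _) (diagonal _), hD]

lemma Matrix.PosSemidef.posSemidef_sqrt {n : Type*} [Fintype n] [DecidableEq n]
    {A : Matrix n n ℝ} (hA : A.PosSemidef) : hA.sqrt.PosSemidef := by
  have hd : (diagonal (((↑) ∘ (√·) ∘ hA.1.eigenvalues) : n → ℝ)).PosSemidef :=
    Matrix.PosSemidef.diagonal (fun i => by simp [Real.sqrt_nonneg])
  have h := hd.mul_mul_conjTranspose_same (hA.1.eigenvectorUnitary : Matrix n n ℝ)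
  rw [← Matrix.star_eq_conjTranspose] at h
  exact h

section Helpers

variable {n : ℕ}

/-- Cauchy–Schwarz for the PSD bilinear form. -/
lemma psd_cauchy_schwarz' (A : Matrix (Fin n) (Fin n) ℝ) (hA : A.PosSemidef)
    (u v : Fin n → ℝ) :
    (u ⬝ᵥ A *ᵥ v) ^ 2 ≤ (u ⬝ᵥ A *ᵥ u) * (v ⬝ᵥ A *ᵥ v) := by
  have hsym : ∀ a b : Fin n → ℝ, a ⬝ᵥ A *ᵥ b = b ⬝ᵥ A *ᵥ a := by
    intro a b
    rw [dotProduct_mulVec, dotProduct_comm]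
    congr 1
    rw [← Matrix.mulVec_transpose]
    congr 1
    have : Aᵀ = A := by
      have := hA.1.eq
      rw [← Matrix.conjTranspose_eq_transpose_of_trivial]; exact this
    rw [this]
  have hq : ∀ t : ℝ, 0 ≤ (v ⬝ᵥ A *ᵥ v) * (t * t) + (2 * (u ⬝ᵥ A *ᵥ v)) * t + (u ⬝ᵥ A *ᵥ u) := by
    intro t
    have h0 := hA.dotProduct_mulVec_nonneg (u + t • v)
    rw [star_trivial] at h0
    have hexp : (u + t • v) ⬝ᵥ A *ᵥ (u + t • v)
        = (v ⬝ᵥ A *ᵥ v) * (t * t) + (2 * (u ⬝ᵥ A *ᵥ v)) * t + (u ⬝ᵥ A *ᵥ u) := by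
      rw [Matrix.mulVec_add, Matrix.mulVec_smul, dotProduct_add, add_dotProduct,
        add_dotProduct, dotProduct_smul, smul_dotProduct, smul_dotProduct,
        dotProduct_smul, hsym v u]
      simp [smul_eq_mul]
      ring
    linarith [hexp ▸ h0]
  have hd := discrim_le_zero hq
  rw [discrim] at hd
  nlinarith [hd]

/-- If `-c•1 ⪯ H ⪯ c•1` then `‖Hv‖² ≤ c²‖v‖²`. -/
lemma sandwich_norm_bound' (H : Matrix (Fin n) (Fin n) ℝ) (c : ℝ) (hc : 0 < c)
    (h1 : ((c • 1 : Matrix (Fin n) (Fin n) ℝ) - H).PosSemidef)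
    (h2 : ((c • 1 : Matrix (Fin n) (Fin n) ℝ) + H).PosSemidef)
    (v : Fin n → ℝ) :
    (H *ᵥ v) ⬝ᵥ (H *ᵥ v) ≤ c ^ 2 * (v ⬝ᵥ v) := by
  set u := H *ᵥ v with hu
  set P := (c • 1 : Matrix (Fin n) (Fin n) ℝ) + H with hP
  set Q := (c • 1 : Matrix (Fin n) (Fin n) ℝ) - H with hQ
  have hx : (u ⬝ᵥ P *ᵥ v) ^ 2 ≤ (u ⬝ᵥ P *ᵥ u) * (v ⬝ᵥ P *ᵥ v) := psd_cauchy_schwarz' P h2 u v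
  have hy : (u ⬝ᵥ Q *ᵥ v) ^ 2 ≤ (u ⬝ᵥ Q *ᵥ u) * (v ⬝ᵥ Q *ᵥ v) := psd_cauchy_schwarz' Q h1 u v
  have hp1 : 0 ≤ u ⬝ᵥ P *ᵥ u := by simpa [star_trivial] using h2.dotProduct_mulVec_nonneg u
  have hp2 : 0 ≤ u ⬝ᵥ Q *ᵥ u := by simpa [star_trivial] using h1.dotProduct_mulVec_nonneg u
  have hq1 : 0 ≤ v ⬝ᵥ P *ᵥ v := by simpa [star_trivial] using h2.dotProduct_mulVec_nonneg v
  have hq2 : 0 ≤ v ⬝ᵥ Q *ᵥ v := by simpa [star_trivial] using h1.dotProduct_mulVec_nonneg v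
  have hmv : ∀ w : Fin n → ℝ, ((c • 1 : Matrix (Fin n) (Fin n) ℝ)) *ᵥ w = c • w := by
    intro w; rw [Matrix.smul_mulVec, Matrix.one_mulVec]
  have hsum_u : (u ⬝ᵥ P *ᵥ u) + (u ⬝ᵥ Q *ᵥ u) = 2 * c * (u ⬝ᵥ u) := by
    rw [hP, hQ, Matrix.add_mulVec, Matrix.sub_mulVec, dotProduct_add, dotProduct_sub, hmv,
      dotProduct_smul]
    ring_nf
  have hsum_v : (v ⬝ᵥ P *ᵥ v) + (v ⬝ᵥ Q *ᵥ v) = 2 * c * (v ⬝ᵥ v) := by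
    rw [hP, hQ, Matrix.add_mulVec, Matrix.sub_mulVec, dotProduct_add, dotProduct_sub, hmv,
      dotProduct_smul]
    ring_nf
  have hdiff : (u ⬝ᵥ P *ᵥ v) - (u ⬝ᵥ Q *ᵥ v) = 2 * (u ⬝ᵥ u) := by
    rw [hP, hQ, Matrix.add_mulVec, Matrix.sub_mulVec, dotProduct_add, dotProduct_sub, ← hu]
    ring
  have hu0 : 0 ≤ u ⬝ᵥ u := by simpa [star_trivial] using dotProduct_self_star_nonneg u
  have hv0 : 0 ≤ v ⬝ᵥ v := by simpa [star_trivial] using dotProduct_self_star_nonneg v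
  -- key: (x - y)² ≤ (p₁+p₂)(q₁+q₂)
  have key : (2 * (u ⬝ᵥ u)) ^ 2 ≤ (2 * c * (u ⬝ᵥ u)) * (2 * c * (v ⬝ᵥ v)) := by
    rw [← hdiff, ← hsum_u, ← hsum_v]
    set x := u ⬝ᵥ P *ᵥ v
    set y := u ⬝ᵥ Q *ᵥ v
    set p1 := u ⬝ᵥ P *ᵥ u
    set p2 := u ⬝ᵥ Q *ᵥ u
    set q1 := v ⬝ᵥ P *ᵥ v
    set q2 := v ⬝ᵥ Q *ᵥ v
    nlinarith [sq_nonneg (p1 * q2 - p2 * q1), sq_nonneg (x + y), sq_nonneg (x - y),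
      mul_nonneg hp1 hq2, mul_nonneg hp2 hq1, mul_nonneg hp1 hq1, mul_nonneg hp2 hq2,
      sq_nonneg (x * y)]
  rcases eq_or_lt_of_le hu0 with h0 | h0
  · rw [← h0]; positivity
  · nlinarith [key]

lemma posSemidef_smul' {M : Matrix (Fin n) (Fin n) ℝ} (hM : M.PosSemidef) {c : ℝ} (hc : 0 ≤ c) :
    (c • M).PosSemidef := by
  refine Matrix.PosSemidef.of_dotProduct_mulVec_nonneg ?_ ?_
  · have h2 : Mᵀ = M := by simpa using hM.1.eq
    simp [Matrix.IsHermitian, Matrix.conjTranspose_smul, h2]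
  · intro x
    rw [Matrix.smul_mulVec, dotProduct_smul]
    exact smul_nonneg hc (hM.dotProduct_mulVec_nonneg x)

lemma posDef_smul' {M : Matrix (Fin n) (Fin n) ℝ} (hM : M.PosDef) {c : ℝ} (hc : 0 < c) :
    (c • M).PosDef := by
  refine Matrix.PosDef.of_dotProduct_mulVec_pos ?_ ?_
  · have h2 : Mᵀ = M := by simpa using hM.1.eq
    simp [Matrix.IsHermitian, Matrix.conjTranspose_smul, h2]
  · intro x hx
    rw [Matrix.smul_mulVec, dotProduct_smul]
    exact smul_pos hc (hM.dotProduct_mulVec_pos hx)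

lemma posDef_one' : (1 : Matrix (Fin n) (Fin n) ℝ).PosDef := by
  refine Matrix.PosDef.of_dotProduct_mulVec_pos ?_ ?_
  · simp [Matrix.IsHermitian]
  · intro x hx
    rw [Matrix.one_mulVec]
    simpa [star_trivial] using (dotProduct_self_star_pos_iff (v := x)).2 hx

end Helpers

/-- Why a spectral sandwich suffices for approximate KRR: if
`(1−ε)(K+λI) ⪯ K̃+λI ⪯ (1+ε)(K+λI)` (Loewner order), then the solutions
`α = (K+λI)⁻¹y` and `α̃ = (K̃+λI)⁻¹y` satisfy
`‖(K+λI)^{1/2}(α̃ − α)‖₂ ≤ (ε/(1−ε))·‖(K+λI)^{-1/2} y‖₂`. -/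
theorem krr_preconditioning_error_bound
    (n : ℕ) (K Ktil : Matrix (Fin n) (Fin n) ℝ)
    (hK : K.PosSemidef) (hKtil : Ktil.PosSemidef)
    (lam ε : ℝ) (hlam : 0 < lam) (hε0 : 0 < ε) (hε1 : ε < 1)
    (hsandwich₁ : ((Ktil + lam • 1) - (1 - ε) • (K + lam • 1)).PosSemidef)
    (hsandwich₂ : ((1 + ε) • (K + lam • 1) - (Ktil + lam • 1)).PosSemidef)
    (hKlam : (K + lam • (1 : Matrix (Fin n) (Fin n) ℝ)).PosSemidef)
    (y : Fin n → ℝ)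
    (α αtil : Fin n → ℝ)
    (hα : α = (K + lam • 1)⁻¹.mulVec y)
    (hαtil : αtil = (Ktil + lam • 1)⁻¹.mulVec y) :
    Real.sqrt ((hKlam.sqrt.mulVec (αtil - α)) ⬝ᵥ (hKlam.sqrt.mulVec (αtil - α))) ≤
      (ε / (1 - ε)) *
        Real.sqrt (((hKlam.sqrt⁻¹).mulVec y) ⬝ᵥ ((hKlam.sqrt⁻¹).mulVec y)) := by
  have hε1' : (0:ℝ) < 1 - ε := by linarith
  have hε1'' : (0:ℝ) < 1 + ε := by linarith
  set A : Matrix (Fin n) (Fin n) ℝ := K + lam • 1 with hAdef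
  set B : Matrix (Fin n) (Fin n) ℝ := Ktil + lam • 1 with hBdef
  set S : Matrix (Fin n) (Fin n) ℝ := hKlam.sqrt with hSdef
  -- positive definiteness of A and B
  have hApd : A.PosDef := Matrix.PosDef.posSemidef_add hK (posDef_smul' posDef_one' hlam)
  have hBpd : B.PosDef := by
    have h := Matrix.PosDef.posSemidef_add hsandwich₁ (posDef_smul' hApd hε1')
    rwa [sub_add_cancel] at h
  -- facts about S
  have hSpsd : S.PosSemidef := hKlam.posSemidef_sqrt
  have hSS : S * S = A := hKlam.sqrt_mul_self
  have hSherm : Sᴴ = S := hSpsd.1.eq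
  have hdetS : IsUnit S.det := by
    have h1 : S.det * S.det = A.det := by rw [← Matrix.det_mul, hSS]
    have h2 : (0:ℝ) < A.det := hApd.det_pos
    have : S.det ≠ 0 := by intro h; rw [h, mul_zero] at h1; linarith
    exact this.isUnit
  have hSmul : S * S⁻¹ = 1 := Matrix.mul_nonsing_inv S hdetS
  have hmulS : S⁻¹ * S = 1 := Matrix.nonsing_inv_mul S hdetS
  have hSinvherm : (S⁻¹)ᴴ = S⁻¹ := by rw [Matrix.conjTranspose_nonsing_inv, hSherm]
  have hAinv : A⁻¹ = S⁻¹ * S⁻¹ := by rw [← hSS, Matrix.mul_inv_rev]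
  have hdetB : IsUnit B.det := (Matrix.isUnit_iff_isUnit_det B).mp hBpd.isUnit
  -- N = S⁻¹ B S⁻¹
  set N : Matrix (Fin n) (Fin n) ℝ := S⁻¹ * B * S⁻¹ with hNdef
  have hNpsd : N.PosSemidef := by
    have h := hBpd.posSemidef.mul_mul_conjTranspose_same S⁻¹
    rwa [hSinvherm] at h
  have hNinv : N⁻¹ = S * (B⁻¹ * S) := by
    rw [hNdef, Matrix.mul_inv_rev, Matrix.mul_inv_rev, Matrix.nonsing_inv_nonsing_inv S hdetS]
  -- sandwich for N
  have hconjA : S⁻¹ * A * S⁻¹ = 1 := by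
    rw [← hSS, ← Matrix.mul_assoc, Matrix.mul_assoc (S⁻¹ * S), hmulS, Matrix.one_mul, hSmul]
  have hN1 : (N - (1 - ε) • 1).PosSemidef := by
    have h := hsandwich₁.mul_mul_conjTranspose_same S⁻¹
    rw [hSinvherm] at h
    have heq : S⁻¹ * (B - (1 - ε) • A) * S⁻¹ = N - (1 - ε) • 1 := by
      rw [Matrix.mul_sub, Matrix.sub_mul, Matrix.mul_smul, Matrix.smul_mul, hconjA, hNdef]
    rwa [heq] at h
  have hN2 : ((1 + ε) • 1 - N).PosSemidef := by
    have h := hsandwich₂.mul_mul_conjTranspose_same S⁻¹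
    rw [hSinvherm] at h
    have heq : S⁻¹ * ((1 + ε) • A - B) * S⁻¹ = (1 + ε) • 1 - N := by
      rw [Matrix.mul_sub, Matrix.sub_mul, Matrix.mul_smul, Matrix.smul_mul, hconjA, hNdef]
    rwa [heq] at h
  -- T = sqrt N
  set T : Matrix (Fin n) (Fin n) ℝ := hNpsd.sqrt with hTdef
  have hTT : T * T = N := hNpsd.sqrt_mul_self
  have hTherm : Tᴴ = T := hNpsd.posSemidef_sqrt.1.eq
  have hdetSinv : IsUnit S⁻¹.det := S.isUnit_nonsing_inv_det hdetS
  have hdetN : IsUnit N.det := by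
    rw [hNdef, Matrix.det_mul, Matrix.det_mul]
    exact (hdetSinv.mul hdetB).mul hdetSinv
  have hdetT : IsUnit T.det := by
    have h1 : T.det * T.det = N.det := by rw [← Matrix.det_mul, hTT]
    have : T.det ≠ 0 := by
      intro h
      rw [h, mul_zero] at h1
      exact hdetN.ne_zero h1.symm
    exact this.isUnit
  have hTmul : T * T⁻¹ = 1 := Matrix.mul_nonsing_inv T hdetT
  have hmulT : T⁻¹ * T = 1 := Matrix.nonsing_inv_mul T hdetT
  have hTinvherm : (T⁻¹)ᴴ = T⁻¹ := by rw [Matrix.conjTranspose_nonsing_inv, hTherm]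
  have hNinvTT : N⁻¹ = T⁻¹ * T⁻¹ := by rw [← hTT, Matrix.mul_inv_rev]
  have hconjN : T⁻¹ * N * T⁻¹ = 1 := by
    rw [← hTT, ← Matrix.mul_assoc, Matrix.mul_assoc (T⁻¹ * T), hmulT, Matrix.one_mul, hTmul]
  have hconj1 : T⁻¹ * (1 : Matrix (Fin n) (Fin n) ℝ) * T⁻¹ = N⁻¹ := by
    rw [Matrix.mul_one, hNinvTT]
  -- sandwich for N⁻¹
  have hM1 : ((1 : Matrix (Fin n) (Fin n) ℝ) - (1 - ε) • N⁻¹).PosSemidef := by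
    have h := hN1.mul_mul_conjTranspose_same T⁻¹
    rw [hTinvherm] at h
    have heq : T⁻¹ * (N - (1 - ε) • 1) * T⁻¹ = 1 - (1 - ε) • N⁻¹ := by
      rw [Matrix.mul_sub, Matrix.sub_mul, Matrix.mul_smul, Matrix.smul_mul, hconjN, hconj1]
    rwa [heq] at h
  have hM2 : ((1 + ε) • N⁻¹ - (1 : Matrix (Fin n) (Fin n) ℝ)).PosSemidef := by
    have h := hN2.mul_mul_conjTranspose_same T⁻¹
    rw [hTinvherm] at h
    have heq : T⁻¹ * ((1 + ε) • 1 - N) * T⁻¹ = (1 + ε) • N⁻¹ - 1 := by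
      rw [Matrix.mul_sub, Matrix.sub_mul, Matrix.mul_smul, Matrix.smul_mul, hconjN, hconj1]
    rwa [heq] at h
  -- the deviation D = N⁻¹ - 1 and the bound c = ε/(1-ε)
  set c : ℝ := ε / (1 - ε) with hcdef
  have hc : 0 < c := div_pos hε0 hε1'
  set D : Matrix (Fin n) (Fin n) ℝ := N⁻¹ - 1 with hDdef
  have hD1 : ((c • 1 : Matrix (Fin n) (Fin n) ℝ) - D).PosSemidef := by
    have heq : (c • 1 : Matrix (Fin n) (Fin n) ℝ) - D
        = (1 / (1 - ε)) • ((1 : Matrix (Fin n) (Fin n) ℝ) - (1 - ε) • N⁻¹) := by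
      rw [hDdef, hcdef]
      match_scalars <;> field_simp <;> ring
    rw [heq]
    exact posSemidef_smul' hM1 (by positivity)
  have hD2 : ((c • 1 : Matrix (Fin n) (Fin n) ℝ) + D).PosSemidef := by
    have heq : (c • 1 : Matrix (Fin n) (Fin n) ℝ) + D
        = (1 / (1 + ε)) • ((1 + ε) • N⁻¹ - (1 : Matrix (Fin n) (Fin n) ℝ))
          + (2 * ε ^ 2 / ((1 - ε) * (1 + ε))) • (1 : Matrix (Fin n) (Fin n) ℝ) := by
      rw [hDdef, hcdef]
      match_scalars <;> field_simp <;> ring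
    rw [heq]
    exact (posSemidef_smul' hM2 (by positivity)).add
      (posSemidef_smul' posDef_one'.posSemidef (by positivity))
  -- the key vector identity
  set v : Fin n → ℝ := S⁻¹ *ᵥ y with hvdef
  have hSBA : S *ᵥ (αtil - α) = D *ᵥ v := by
    have hmat : S * (B⁻¹ - A⁻¹) = D * S⁻¹ := by
      rw [hDdef, hNinv, hAinv, Matrix.mul_sub, Matrix.sub_mul,
        ← Matrix.mul_assoc, ← Matrix.mul_assoc, Matrix.mul_assoc (S * B⁻¹), hSmul,
        Matrix.mul_one, Matrix.one_mul]
    rw [hα, hαtil, ← Matrix.sub_mulVec, Matrix.mulVec_mulVec, hmat, ← Matrix.mulVec_mulVec,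
      hvdef]
  -- conclusion
  have hbound := sandwich_norm_bound' D c hc hD1 hD2 v
  rw [show hKlam.sqrt.mulVec (αtil - α) = S *ᵥ (αtil - α) from rfl, hSBA]
  calc Real.sqrt ((D *ᵥ v) ⬝ᵥ (D *ᵥ v)) ≤ Real.sqrt (c ^ 2 * (v ⬝ᵥ v)) :=
        Real.sqrt_le_sqrt hbound
    _ = c * Real.sqrt (v ⬝ᵥ v) := by
        rw [Real.sqrt_mul (sq_nonneg c), Real.sqrt_sq hc.le]
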